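/- Let D be a unitary representation of a group G on ℂⁿ and let H : ℝ³ → Matₙ(ℂ). If H(k) = Σ_κ Σ_{μ,ν} a_{κμν} Σ_l X_l^{κ,μ} conj(f_l^{κ,ν}(k)) where for each g ∈ G, D(g) X_l^{κ,μ} D(g)⁻¹ = Σ_{l'} X_{l'}^{κ,μ} D^κ(g)_{l'l} and f_l^{κ,ν}(g⁻¹k) = Σ_{l'} f_{l'}^{κ,ν}(k) D^κ(g)_{l'l} with each D^κ(g) a unitary matrix, then H satisfies the symmetry constraint H(k) = D(g) H(g⁻¹k) D(g)⁻¹ for all g ∈ G and all k. -/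
import Mathlib


open Matrix
open scoped ComplexConjugate

/-- If the Hamiltonian H is expanded as H(k) = Σ_{κ,μ,ν} a_{κμν} Σ_l X_l^{κ,μ} conj(f_l^{κ,ν}(k)),
where the matrix families X^{κ,μ} and function families f^{κ,ν} both transform under g ∈ G
by the same unitary matrices D^κ(g), then H satisfies the symmetry constraint
H(k) = D(g) H(g⁻¹k) D(g)⁻¹ for all g ∈ G and k ∈ ℝ³. -/
theorem stmt_6 {G : Type*} [Group G] {n : ℕ}
    (φ : G →* ((Fin 3 → ℝ) ≃ₗ[ℝ] (Fin 3 → ℝ)))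
    (D : G →* Matrix.unitaryGroup (Fin n) ℂ)
    {K : Type*} [Fintype K] (d : K → ℕ)
    (Dκ : (κ : K) → G →* Matrix.unitaryGroup (Fin (d κ)) ℂ)
    (μIdx νIdx : K → Type*) [∀ κ, Fintype (μIdx κ)] [∀ κ, Fintype (νIdx κ)]
    (a : (κ : K) → μIdx κ → νIdx κ → ℝ)
    (X : (κ : K) → μIdx κ → Fin (d κ) → Matrix (Fin n) (Fin n) ℂ)
    (f : (κ : K) → νIdx κ → Fin (d κ) → (Fin 3 → ℝ) → ℂ)
    (hX : ∀ (g : G) (κ : K) (μ : μIdx κ) (l : Fin (d κ)),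
      (D g : Matrix (Fin n) (Fin n) ℂ) * X κ μ l * ((D g)⁻¹ : Matrix.unitaryGroup (Fin n) ℂ)
        = ∑ l', ((Dκ κ g : Matrix (Fin (d κ)) (Fin (d κ)) ℂ) l' l) • X κ μ l')
    (hf : ∀ (g : G) (κ : K) (ν : νIdx κ) (l : Fin (d κ)) (k : Fin 3 → ℝ),
      f κ ν l ((φ g).symm k)
        = ∑ l', ((Dκ κ g : Matrix (Fin (d κ)) (Fin (d κ)) ℂ) l' l) * f κ ν l' k)
    (H : (Fin 3 → ℝ) → Matrix (Fin n) (Fin n) ℂ)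
    (hH : ∀ k, H k = ∑ κ, ∑ μ : μIdx κ, ∑ ν : νIdx κ,
      (a κ μ ν : ℂ) • ∑ l, conj (f κ ν l k) • X κ μ l) :
    ∀ (g : G) (k : Fin 3 → ℝ),
      H k = (D g : Matrix (Fin n) (Fin n) ℂ) * H ((φ g).symm k)
              * ((D g)⁻¹ : Matrix.unitaryGroup (Fin n) ℂ) := by
  intro g k
  rw [hH, hH]
  rw [Finset.mul_sum, Finset.sum_mul]
  refine Finset.sum_congr rfl fun κ _ => ?_
  rw [Finset.mul_sum, Finset.sum_mul]
  refine Finset.sum_congr rfl fun μ _ => ?_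
  rw [Finset.mul_sum, Finset.sum_mul]
  refine Finset.sum_congr rfl fun ν _ => ?_
  rw [mul_smul_comm, smul_mul_assoc]
  congr 1
  rw [Finset.mul_sum, Finset.sum_mul]
  simp_rw [mul_smul_comm, smul_mul_assoc, hX, hf, map_sum, _root_.map_mul, Finset.sum_smul,
    Finset.smul_sum, smul_smul]
  -- now both sides are sums; rearrange
  rw [Finset.sum_comm]
  refine Finset.sum_congr rfl fun l' _ => ?_
  have hu : (Dκ κ g : Matrix (Fin (d κ)) (Fin (d κ)) ℂ) * star (Dκ κ g : Matrix (Fin (d κ)) (Fin (d κ)) ℂ) = 1 :=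
    Unitary.mul_star_self_of_mem (Dκ κ g).2
  set M := (Dκ κ g : Matrix (Fin (d κ)) (Fin (d κ)) ℂ) with hM
  have key : ∀ l'', (∑ x, M l'' x * conj (M l' x)) = if l'' = l' then 1 else 0 := by
    intro l''
    have := congrFun (congrFun hu l'') l'
    simpa [Matrix.mul_apply, Matrix.one_apply, Matrix.conjTranspose_apply] using this
  calc conj (f κ ν l' k) • X κ μ l'
      = ∑ l'', ((if l'' = l' then (1:ℂ) else 0) * conj (f κ ν l' k)) • X κ μ l'' := by
        simp [ite_mul, ite_smul]
    _ = ∑ l'', ((∑ x, M l'' x * conj (M l' x)) * conj (f κ ν l' k)) • X κ μ l'' := by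
        simp_rw [key]
    _ = ∑ l'', ∑ x, (conj (M l' x) * conj (f κ ν l' k) * M l'' x) • X κ μ l'' := by
        refine Finset.sum_congr rfl fun l'' _ => ?_
        rw [Finset.sum_mul, Finset.sum_smul]
        refine Finset.sum_congr rfl fun x _ => ?_
        congr 1; ring
    _ = ∑ x, ∑ l'', (conj (M l' x) * conj (f κ ν l' k) * M l'' x) • X κ μ l'' :=
        by rw [Finset.sum_comm]
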